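/- Under the same ODE system and boundary conditions for v as in the controller value problem (with c − (λ̄−λ̲)² ≥ 0), and assuming additionally the smooth-pasting condition v'(b₂*) = (λ̄−λ̲)/(b₂*(1−b₂*)λ̲) and the jump value v(b₂*) = c/r − (λ̄−λ̲)/(α₁(λ̲)λ̲): the right derivative v'(b₁*+) is strictly positive. -/
import Mathlib

open Set Filter

private lemma nonneg_of_deriv_nonneg' (a b : ℝ) (f f' : ℝ → ℝ)
    (hd : ∀ p ∈ Set.Ioo a b, HasDerivAt f (f' p) p)
    (hf' : ∀ p ∈ Set.Ioo a b, 0 ≤ f' p)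
    (hlim : Filter.Tendsto f (nhdsWithin a (Set.Ioi a)) (nhds 0)) :
    ∀ p ∈ Set.Ioo a b, 0 ≤ f p := by
  have hmono : MonotoneOn f (Set.Ioo a b) := by
    apply monotoneOn_of_deriv_nonneg (convex_Ioo a b)
      (fun x hx => (hd x hx).continuousAt.continuousWithinAt)
    · rw [interior_Ioo]
      exact fun x hx => (hd x hx).differentiableAt.differentiableWithinAt
    · rw [interior_Ioo]
      intro x hx
      rw [(hd x hx).deriv]
      exact hf' x hx
  intro p hp
  refine le_of_tendsto hlim ?_
  filter_upwards [Ioo_mem_nhdsGT_of_mem (Set.left_mem_Ico.2 hp.1)] with x hx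
  exact hmono ⟨hx.1, hx.2.trans hp.2⟩ hp hx.2.le

private lemma nonpos_of_deriv_nonpos' (a b : ℝ) (f f' : ℝ → ℝ)
    (hd : ∀ p ∈ Set.Ioo a b, HasDerivAt f (f' p) p)
    (hf' : ∀ p ∈ Set.Ioo a b, f' p ≤ 0)
    (hlim : Filter.Tendsto f (nhdsWithin a (Set.Ioi a)) (nhds 0)) :
    ∀ p ∈ Set.Ioo a b, f p ≤ 0 := by
  intro p hp
  have := nonneg_of_deriv_nonneg' a b (fun x => -f x) (fun x => -f' x)
    (fun x hx => (hd x hx).neg) (fun x hx => neg_nonneg.2 (hf' x hx))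
    (by simpa using hlim.neg) p hp
  simp only [neg_nonneg] at this
  exact this

private lemma deriv_zero_of_zero' (x y : ℝ) (f f' : ℝ → ℝ)
    (hd : ∀ p ∈ Set.Ioo x y, HasDerivAt f (f' p) p)
    (h0 : ∀ p ∈ Set.Ioo x y, f p = 0) :
    ∀ p ∈ Set.Ioo x y, f' p = 0 := by
  intro p hp
  have hz : f =ᶠ[nhds p] (fun _ => (0:ℝ)) :=
    eventually_of_mem (Ioo_mem_nhds hp.1 hp.2) h0
  exact (hd p hp).unique ((hasDerivAt_const p (0:ℝ)).congr_of_eventuallyEq hz)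

noncomputable def alpha1 (r lam : ℝ) : ℝ := 1/2 + Real.sqrt (8*r/lam^2 + 1) / 2

set_option maxHeartbeats 1600000 in
theorem stmt7 (r c l L b1 b2 vb1 : ℝ) (v v' v'' : ℝ → ℝ)
    (hr : 0 < r) (hc : 0 < c) (hl : 0 < l) (hlL : l < L)
    (hcost : 0 ≤ c - (L - l)^2)
    (hb1 : 0 < b1) (hb12 : b1 < b2) (hb2 : b2 < 1)
    (hcont : ContinuousOn v (Set.Ioc 0 1))
    (hd1 : ∀ p ∈ Set.Ioo b1 1, HasDerivAt v (v' p) p)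
    (hC1 : ContinuousOn v' (Set.Ioo b1 1))
    (hd2 : ∀ p ∈ Set.Ioo b1 b2 ∪ Set.Ioo b2 1, HasDerivAt v' (v'' p) p)
    (hODE1 : ∀ p ∈ Set.Ioo b1 b2,
      L^2*p^2*(1-p)^2/2 * v'' p + L^2*(1-p)^2*p * v' p - r * v p + c - (L-l)^2 = 0)
    (hODE2 : ∀ p ∈ Set.Ioo b2 1,
      l^2*p^2*(1-p)^2/2 * v'' p + l^2*(1-p)^2*p * v' p - r * v p + c = 0)
    (hvb1 : v b1 = 0) (hv1 : v 1 = c/r)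
    (hsp : v' b2 = (L - l)/(b2*(1-b2)*l))
    (hjump : v b2 = c/r - (L - l)/(alpha1 r l * l))
    (hlim : Filter.Tendsto v' (nhdsWithin b1 (Set.Ioi b1)) (nhds vb1)) :
    0 < vb1 := by
  by_contra hpos
  push_neg at hpos
  have hL : 0 < L := lt_trans hl hlL
  have hb2pos : 0 < b2 := lt_trans hb1 hb12
  have hb11 : b1 < 1 := lt_trans hb12 hb2
  have h1b2 : 0 < 1 - b2 := sub_pos.2 hb2
  have hsp_pos : 0 < (L - l)/(b2*(1-b2)*l) :=
    div_pos (sub_pos.2 hlL) (mul_pos (mul_pos hb2pos h1b2) hl)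
  -- Lemma A : v is nonnegative on (b1, 1)
  have nonneg : ∀ q ∈ Set.Ioo b1 1, 0 ≤ v q := by
    by_contra hA
    push_neg at hA
    obtain ⟨q, hq, hvq⟩ := hA
    have hsub : Set.Icc b1 1 ⊆ Set.Ioc 0 1 := fun x hx => ⟨lt_of_lt_of_le hb1 hx.1, hx.2⟩
    obtain ⟨pt, hptmem, hmin⟩ := (isCompact_Icc : IsCompact (Set.Icc b1 1)).exists_isMinOn
      (Set.nonempty_Icc.2 hb11.le) (hcont.mono hsub)
    have hptq : v pt ≤ v q := hmin ⟨hq.1.le, hq.2.le⟩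
    have hptneg : v pt < 0 := lt_of_le_of_lt hptq hvq
    have hpt1 : pt ≠ 1 := by
      intro h; rw [h, hv1] at hptneg; have := div_pos hc hr; linarith
    have hptb1 : pt ≠ b1 := by intro h; rw [h, hvb1] at hptneg; linarith
    have hptIoo : pt ∈ Set.Ioo b1 1 :=
      ⟨lt_of_le_of_ne hptmem.1 (Ne.symm hptb1), lt_of_le_of_ne hptmem.2 hpt1⟩
    have hlocal : IsLocalMin v pt := hmin.isLocalMin (Icc_mem_nhds hptIoo.1 hptIoo.2)
    have hv'pt : v' pt = 0 := hlocal.hasDerivAt_eq_zero (hd1 pt hptIoo)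
    have hptb2 : pt ≠ b2 := by
      intro h; rw [h, hsp] at hv'pt; linarith
    have hmem2 : pt ∈ Set.Ioo b1 b2 ∪ Set.Ioo b2 1 := by
      rcases lt_or_gt_of_ne hptb2 with h | h
      · exact Or.inl ⟨hptIoo.1, h⟩
      · exact Or.inr ⟨h, hptIoo.2⟩
    have hpt0 : 0 < pt := lt_trans hb1 hptIoo.1
    have hpt1' : 0 < 1 - pt := sub_pos.2 hptIoo.2
    have hv'' : v'' pt < 0 := by
      rcases hmem2 with h | h
      · have hode := hODE1 pt h
        have hApos : 0 < L^2*pt^2*(1-pt)^2/2 := by positivity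
        by_contra hcon
        push_neg at hcon
        nlinarith [mul_nonneg hApos.le hcon, mul_pos hr (neg_pos.2 hptneg)]
      · have hode := hODE2 pt h
        have hApos : 0 < l^2*pt^2*(1-pt)^2/2 := by positivity
        by_contra hcon
        push_neg at hcon
        nlinarith [mul_nonneg hApos.le hcon, mul_pos hr (neg_pos.2 hptneg)]
    -- v' is negative just to the right of pt
    have hslope : {x | v' x < 0} ∈ nhdsWithin pt (Set.Ioi pt) := by
      have h1 : Filter.Tendsto (slope v' pt) (nhdsWithin pt {pt}ᶜ) (nhds (v'' pt)) :=
        hasDerivAt_iff_tendsto_slope.mp (hd2 pt hmem2)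
      have h2 : ∀ᶠ x in nhdsWithin pt {pt}ᶜ, slope v' pt x < 0 :=
        h1.eventually (eventually_lt_nhds hv'')
      have h3 : ∀ᶠ x in nhdsWithin pt (Set.Ioi pt), slope v' pt x < 0 :=
        h2.filter_mono (nhdsWithin_mono pt (fun x hx => ne_of_gt hx))
      filter_upwards [h3, self_mem_nhdsWithin] with x hx hx2
      have hxpt : 0 < x - pt := sub_pos.2 hx2
      rw [slope_def_field, hv'pt, sub_zero] at hx
      by_contra hcon
      push_neg at hcon
      exact absurd hx (not_lt.2 (div_nonneg hcon hxpt.le))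
    obtain ⟨u, hu, husub⟩ := mem_nhdsGT_iff_exists_Ioo_subset.mp hslope
    set u' := min u 1 with hu'def
    have hptu' : pt < u' := lt_min hu hptIoo.2
    set x₀ := (pt + u')/2 with hx₀def
    have hx₀ : pt < x₀ ∧ x₀ < u' := ⟨by linarith, by linarith⟩
    have hx₀1 : x₀ < 1 := lt_of_lt_of_le hx₀.2 (min_le_right u 1)
    have hx₀u : x₀ < u := lt_of_lt_of_le hx₀.2 (min_le_left u 1)
    have hanti : StrictAntiOn v (Set.Icc pt x₀) := by
      apply strictAntiOn_of_deriv_neg (convex_Icc _ _)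
      · intro y hy
        have hy1 : y ∈ Set.Ioo b1 1 :=
          ⟨lt_of_lt_of_le hptIoo.1 hy.1, lt_of_le_of_lt hy.2 hx₀1⟩
        exact (hd1 y hy1).continuousAt.continuousWithinAt
      · rw [interior_Icc]
        intro y hy
        have hy1 : y ∈ Set.Ioo b1 1 :=
          ⟨lt_trans hptIoo.1 hy.1, lt_trans hy.2 hx₀1⟩
        rw [(hd1 y hy1).deriv]
        exact husub ⟨hy.1, lt_trans hy.2 hx₀u⟩
    have hlt : v x₀ < v pt :=
      hanti (Set.left_mem_Icc.2 hx₀.1.le) (Set.right_mem_Icc.2 hx₀.1.le) hx₀.1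
    have : v pt ≤ v x₀ := hmin ⟨le_trans hptmem.1 hx₀.1.le, hx₀1.le⟩
    linarith
  -- v tends to 0 from the right at b1
  have htv0 : Filter.Tendsto v (nhdsWithin b1 (Set.Ioi b1)) (nhds 0) := by
    have hle : nhdsWithin b1 (Set.Ioi b1) ≤ nhdsWithin b1 (Set.Ioc 0 1) := by
      rw [nhdsWithin_le_iff]
      exact mem_of_superset (Ioc_mem_nhdsGT_of_mem (Set.left_mem_Ico.2 hb11))
        (fun x hx => ⟨lt_trans hb1 hx.1, hx.2⟩)
    have := (hcont b1 ⟨hb1, hb11.le⟩).mono_left hle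
    rwa [hvb1] at this
  -- Case vb1 < 0 is impossible
  rcases lt_or_eq_of_le hpos with hneg | heq
  · have hev : {x | v' x < 0} ∈ nhdsWithin b1 (Set.Ioi b1) :=
      hlim.eventually (eventually_lt_nhds hneg)
    obtain ⟨u, hu, husub⟩ := mem_nhdsGT_iff_exists_Ioo_subset.mp hev
    set t := min u b2 with htdef
    have hb1t : b1 < t := lt_min hu hb12
    have htb2 : t ≤ b2 := min_le_right u b2
    have hIsub : Set.Ioo b1 t ⊆ Set.Ioo b1 1 :=
      fun x hx => ⟨hx.1, lt_of_lt_of_le hx.2 (le_trans htb2 hb2.le)⟩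
    have hvle : ∀ p ∈ Set.Ioo b1 t, v p ≤ 0 :=
      nonpos_of_deriv_nonpos' b1 t v v' (fun p hp => hd1 p (hIsub hp))
        (fun p hp => (husub ⟨hp.1, lt_of_lt_of_le hp.2 (min_le_left u b2)⟩).le) htv0
    have hv0 : ∀ p ∈ Set.Ioo b1 t, v p = 0 :=
      fun p hp => le_antisymm (hvle p hp) (nonneg p (hIsub hp))
    have hv'0 : ∀ p ∈ Set.Ioo b1 t, v' p = 0 :=
      deriv_zero_of_zero' b1 t v v' (fun p hp => hd1 p (hIsub hp)) hv0
    obtain ⟨p0, hp0⟩ : ∃ p, p ∈ Set.Ioo b1 t := ⟨(b1 + t)/2, by constructor <;> linarith⟩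
    have h1 := hv'0 p0 hp0
    have h2 := husub ⟨hp0.1, lt_of_lt_of_le hp0.2 (min_le_left u b2)⟩
    simp only [Set.mem_setOf_eq] at h2
    linarith
  -- Now vb1 = 0
  have hlim0 : Filter.Tendsto v' (nhdsWithin b1 (Set.Ioi b1)) (nhds 0) := by
    rw [heq] at hlim; exact hlim
  rcases eq_or_lt_of_le hcost with hc0 | hcpos
  · -- degenerate case c = (L-l)^2 : Grönwall-type argument
    have hkey : ∀ p ∈ Set.Ioo b1 b2,
        (L^2*(1-p)^2/2) * (2*p*v' p + p^2*v'' p) = r * v p := by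
      intro p hp
      linear_combination (hODE1 p hp) + hc0
    have hwderiv : ∀ p ∈ Set.Ioo b1 b2,
        HasDerivAt (fun q => q^2 * v' q) (2*p*v' p + p^2*v'' p) p := by
      intro p hp
      have h := (hasDerivAt_pow 2 p).mul (hd2 p (Or.inl hp))
      have h2 : 2*p*v' p + p^2*v'' p = (↑2*p^(2-1)) * v' p + p^2*v'' p := by push_cast; ring
      rw [h2]
      exact h
    have hwlim : Filter.Tendsto (fun q => q^2 * v' q) (nhdsWithin b1 (Set.Ioi b1)) (nhds 0) := by
      have hp2 : Filter.Tendsto (fun q : ℝ => q^2) (nhdsWithin b1 (Set.Ioi b1)) (nhds (b1^2)) :=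
        ((continuous_pow 2).continuousAt.tendsto).mono_left nhdsWithin_le_nhds
      simpa using hp2.mul hlim0
    have hw'nonneg : ∀ p ∈ Set.Ioo b1 b2, 0 ≤ 2*p*v' p + p^2*v'' p := by
      intro p hp
      have hvp : 0 ≤ v p := nonneg p ⟨hp.1, lt_trans hp.2 hb2⟩
      have h1p : 0 < 1 - p := sub_pos.2 (lt_trans hp.2 hb2)
      have hC : 0 < L^2*(1-p)^2/2 := by positivity
      by_contra hcon
      push_neg at hcon
      nlinarith [hkey p hp, mul_pos hC (neg_pos.2 hcon), mul_nonneg hr.le hvp]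
    have hwpos : ∀ p ∈ Set.Ioo b1 b2, 0 ≤ p^2 * v' p :=
      nonneg_of_deriv_nonneg' b1 b2 (fun q => q^2 * v' q)
        (fun p => 2*p*v' p + p^2*v'' p) hwderiv hw'nonneg hwlim
    have hv'nonneg : ∀ p ∈ Set.Ioo b1 b2, 0 ≤ v' p := by
      intro p hp
      have hppos : 0 < p := lt_trans hb1 hp.1
      by_contra hcon
      push_neg at hcon
      nlinarith [hwpos p hp, mul_pos (pow_pos hppos 2) (neg_pos.2 hcon)]
    -- Grönwall function G = v + p² v'
    obtain ⟨K, hKpos, hK1, hK2⟩ :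
        ∃ K : ℝ, 0 < K ∧ 1 ≤ K * b1^2 ∧ 2*r ≤ K * (L^2*(1-b2)^2) := by
      refine ⟨1/b1^2 + 2*r/(L^2*(1-b2)^2), ?_, ?_, ?_⟩
      · have hA : (0:ℝ) < 1/b1^2 := by positivity
        have hB : (0:ℝ) < 2*r/(L^2*(1-b2)^2) :=
          div_pos (by linarith) (mul_pos (pow_pos hL 2) (pow_pos h1b2 2))
        linarith
      · have hB : (0:ℝ) ≤ 2*r/(L^2*(1-b2)^2) :=
          le_of_lt (div_pos (by linarith) (mul_pos (pow_pos hL 2) (pow_pos h1b2 2)))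
        have h3 : (1/b1^2) * b1^2 = 1 := by field_simp
        nlinarith [mul_nonneg hB (sq_nonneg b1)]
      · have h1 : (0:ℝ) ≤ (1/b1^2) * (L^2*(1-b2)^2) := by positivity
        have h3 : (2*r/(L^2*(1-b2)^2)) * (L^2*(1-b2)^2) = 2*r := by
          have hne : L^2*(1-b2)^2 ≠ 0 := ne_of_gt (mul_pos (pow_pos hL 2) (pow_pos h1b2 2))
          field_simp
        nlinarith
    have hGK : ∀ p ∈ Set.Ioo b1 b2,
        v' p + (2*p*v' p + p^2*v'' p) ≤ K * (v p + p^2 * v' p) := by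
      intro p hp
      have hvp : 0 ≤ v p := nonneg p ⟨hp.1, lt_trans hp.2 hb2⟩
      have hv'p : 0 ≤ v' p := hv'nonneg p hp
      have h1p : 0 < 1 - p := sub_pos.2 (lt_trans hp.2 hb2)
      have h1pb2 : 1 - b2 ≤ 1 - p := by linarith [hp.2]
      have hC : 0 < L^2*(1-p)^2/2 := by positivity
      have hb1p : b1^2 ≤ p^2 := by nlinarith [hp.1, hb1]
      -- part (i): v' p ≤ K * (p^2 * v' p)
      have hi : v' p ≤ K * (p^2 * v' p) := by
        have h1 : 1 * v' p ≤ (K*p^2) * v' p := by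
          apply mul_le_mul_of_nonneg_right _ hv'p
          nlinarith [hK1, mul_le_mul_of_nonneg_left hb1p hKpos.le]
        nlinarith [h1]
      -- part (ii): 2p v' + p² v'' ≤ K * v p
      have hii : 2*p*v' p + p^2*v'' p ≤ K * v p := by
        have hCge : L^2*(1-b2)^2 ≤ L^2*(1-p)^2 := by
          nlinarith [mul_self_le_mul_self h1b2.le h1pb2]
        by_contra hcon
        push_neg at hcon
        have h2 : (L^2*(1-p)^2/2) * (K * v p) < (L^2*(1-p)^2/2) * (2*p*v' p + p^2*v'' p) :=
          mul_lt_mul_of_pos_left hcon hC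
        rw [hkey p hp] at h2
        -- but C*(K*v) ≥ (L²(1-b2)²/2)*K*v ≥ r*v
        nlinarith [mul_nonneg (mul_nonneg hKpos.le (sub_nonneg.2 hCge)) hvp,
          mul_nonneg (sub_nonneg.2 hK2) hvp]
      linarith
    -- F = G * exp(-K p) is nonincreasing with limit 0
    have hexp : ∀ p : ℝ, HasDerivAt (fun q => Real.exp (-K*q)) (Real.exp (-K*p) * (-K)) p := by
      intro p
      simpa using (((hasDerivAt_id p).const_mul (-K)).exp)
    have hGderiv : ∀ p ∈ Set.Ioo b1 b2,
        HasDerivAt (fun q => v q + q^2 * v' q) (v' p + (2*p*v' p + p^2*v'' p)) p := by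
      intro p hp
      exact (hd1 p ⟨hp.1, lt_trans hp.2 hb2⟩).add (hwderiv p hp)
    have hFderiv : ∀ p ∈ Set.Ioo b1 b2,
        HasDerivAt (fun q => (v q + q^2 * v' q) * Real.exp (-K*q))
          ((v' p + (2*p*v' p + p^2*v'' p)) * Real.exp (-K*p)
            + (v p + p^2 * v' p) * (Real.exp (-K*p) * (-K))) p := by
      intro p hp
      exact (hGderiv p hp).mul (hexp p)
    have hF'le : ∀ p ∈ Set.Ioo b1 b2,
        (v' p + (2*p*v' p + p^2*v'' p)) * Real.exp (-K*p)
          + (v p + p^2 * v' p) * (Real.exp (-K*p) * (-K)) ≤ 0 := by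
      intro p hp
      have he : 0 < Real.exp (-K*p) := Real.exp_pos _
      nlinarith [hGK p hp, mul_le_mul_of_nonneg_right (hGK p hp) he.le]
    have hFlim : Filter.Tendsto (fun q => (v q + q^2 * v' q) * Real.exp (-K*q))
        (nhdsWithin b1 (Set.Ioi b1)) (nhds 0) := by
      have hG : Filter.Tendsto (fun q => v q + q^2 * v' q)
          (nhdsWithin b1 (Set.Ioi b1)) (nhds 0) := by
        simpa using htv0.add hwlim
      have hE : Filter.Tendsto (fun q : ℝ => Real.exp (-K*q))
          (nhdsWithin b1 (Set.Ioi b1)) (nhds (Real.exp (-K*b1))) :=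
        ((Real.continuous_exp.comp (continuous_const.mul continuous_id)).continuousAt.tendsto).mono_left
          nhdsWithin_le_nhds
      simpa using hG.mul hE
    have hFle : ∀ p ∈ Set.Ioo b1 b2,
        (v p + p^2 * v' p) * Real.exp (-K*p) ≤ 0 :=
      nonpos_of_deriv_nonpos' b1 b2 (fun q => (v q + q^2 * v' q) * Real.exp (-K*q))
        (fun p => (v' p + (2*p*v' p + p^2*v'' p)) * Real.exp (-K*p)
          + (v p + p^2 * v' p) * (Real.exp (-K*p) * (-K))) hFderiv hF'le hFlim
    have hv'zero : ∀ p ∈ Set.Ioo b1 b2, v' p = 0 := by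
      intro p hp
      have hvp : 0 ≤ v p := nonneg p ⟨hp.1, lt_trans hp.2 hb2⟩
      have hwp : 0 ≤ p^2 * v' p := hwpos p hp
      have he : 0 < Real.exp (-K*p) := Real.exp_pos _
      have hG0 : v p + p^2 * v' p ≤ 0 := by
        nlinarith [hFle p hp]
      have hppos : 0 < p := lt_trans hb1 hp.1
      have : p^2 * v' p = 0 := le_antisymm (by linarith) hwp
      have hp2 : (0:ℝ) < p^2 := pow_pos hppos 2
      by_contra hcon
      rcases lt_or_gt_of_ne hcon with h | h
      · nlinarith
      · nlinarith
    -- v' b2 = 0 by continuity, contradiction with smooth pasting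
    have hnb : (nhdsWithin b2 (Set.Ioo b1 b2)).NeBot := by
      rw [← mem_closure_iff_nhdsWithin_neBot, closure_Ioo (ne_of_lt hb12)]
      exact ⟨hb12.le, le_refl b2⟩
    have hcw : Filter.Tendsto v' (nhdsWithin b2 (Set.Ioo b1 b2)) (nhds (v' b2)) :=
      (hC1 b2 ⟨hb12, hb2⟩).mono_left
        (nhdsWithin_mono b2 (fun x hx => ⟨hx.1, lt_trans hx.2 hb2⟩))
    have h0' : Filter.Tendsto v' (nhdsWithin b2 (Set.Ioo b1 b2)) (nhds 0) := by
      apply Filter.Tendsto.congr' _ (tendsto_const_nhds (α := ℝ))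
      exact eventually_of_mem self_mem_nhdsWithin (fun x hx => (hv'zero x hx).symm)
    have : v' b2 = 0 := tendsto_nhds_unique hcw h0'
    rw [hsp] at this
    linarith
  · -- case c - (L-l)² > 0 : v'' is negative near b1
    have hden : Filter.Tendsto (fun p : ℝ => 2/(L^2*p^2*(1-p)^2))
        (nhdsWithin b1 (Set.Ioi b1)) (nhds (2/(L^2*b1^2*(1-b1)^2))) := by
      have h1b1 : 0 < 1 - b1 := sub_pos.2 hb11
      have hne : L^2*b1^2*(1-b1)^2 ≠ 0 :=
        ne_of_gt (mul_pos (mul_pos (pow_pos hL 2) (pow_pos hb1 2)) (pow_pos h1b1 2))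
      have : ContinuousAt (fun p : ℝ => 2/(L^2*p^2*(1-p)^2)) b1 := by
        simp only [div_eq_mul_inv]
        exact continuousAt_const.mul (ContinuousAt.inv₀ (by fun_prop) hne)
      exact this.tendsto.mono_left nhdsWithin_le_nhds
    have hpoly : Filter.Tendsto (fun p : ℝ => L^2*(1-p)^2*p)
        (nhdsWithin b1 (Set.Ioi b1)) (nhds (L^2*(1-b1)^2*b1)) := by
      have : ContinuousAt (fun p : ℝ => L^2*(1-p)^2*p) b1 := by fun_prop
      exact this.tendsto.mono_left nhdsWithin_le_nhds
    have hE : Filter.Tendsto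
        (fun p => (r * v p - (c - (L-l)^2) - (L^2*(1-p)^2*p) * v' p) * (2/(L^2*p^2*(1-p)^2)))
        (nhdsWithin b1 (Set.Ioi b1))
        (nhds ((r * 0 - (c - (L-l)^2) - (L^2*(1-b1)^2*b1) * 0) * (2/(L^2*b1^2*(1-b1)^2)))) := by
      exact (((htv0.const_mul r).sub tendsto_const_nhds).sub (hpoly.mul hlim0)).mul hden
    have hval : (r * 0 - (c - (L-l)^2) - (L^2*(1-b1)^2*b1) * 0) * (2/(L^2*b1^2*(1-b1)^2)) < 0 := by
      have hdpos : 0 < 2/(L^2*b1^2*(1-b1)^2) := by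
        have h1b1 : 0 < 1 - b1 := sub_pos.2 hb11
        positivity
      have heq2 : r * 0 - (c - (L-l)^2) - (L^2*(1-b1)^2*b1) * 0 = -(c - (L-l)^2) := by ring
      rw [heq2]
      exact mul_neg_of_neg_of_pos (by linarith) hdpos
    have hvd : ∀ p ∈ Set.Ioo b1 b2,
        v'' p = (r * v p - (c - (L-l)^2) - (L^2*(1-p)^2*p) * v' p) * (2/(L^2*p^2*(1-p)^2)) := by
      intro p hp
      have hppos : 0 < p := lt_trans hb1 hp.1
      have h1p : 0 < 1 - p := sub_pos.2 (lt_trans hp.2 hb2)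
      have hne : L^2*p^2*(1-p)^2 ≠ 0 := by positivity
      have h1 : L^2*p^2*(1-p)^2/2 * v'' p
          = r * v p - (c - (L-l)^2) - (L^2*(1-p)^2*p) * v' p := by
        linarith [hODE1 p hp]
      have h2 : v'' p = (L^2*p^2*(1-p)^2/2 * v'' p) * (2/(L^2*p^2*(1-p)^2)) := by
        field_simp
      rw [h2, h1]
    have hev : {p | v'' p < 0} ∈ nhdsWithin b1 (Set.Ioi b1) := by
      have h1 : ∀ᶠ p in nhdsWithin b1 (Set.Ioi b1),
          (r * v p - (c - (L-l)^2) - (L^2*(1-p)^2*p) * v' p) * (2/(L^2*p^2*(1-p)^2)) < 0 :=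
        hE.eventually (eventually_lt_nhds hval)
      have h2 : Set.Ioo b1 b2 ∈ nhdsWithin b1 (Set.Ioi b1) :=
        Ioo_mem_nhdsGT_of_mem (Set.left_mem_Ico.2 hb12)
      filter_upwards [h1, h2] with p hp1 hp2
      rw [hvd p hp2]
      exact hp1
    obtain ⟨u, hu, husub⟩ := mem_nhdsGT_iff_exists_Ioo_subset.mp hev
    set t := min u b2 with htdef
    have hb1t : b1 < t := lt_min hu hb12
    have htb2 : t ≤ b2 := min_le_right u b2
    have hIsubb2 : Set.Ioo b1 t ⊆ Set.Ioo b1 b2 :=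
      fun x hx => ⟨hx.1, lt_of_lt_of_le hx.2 htb2⟩
    have hIsub : Set.Ioo b1 t ⊆ Set.Ioo b1 1 :=
      fun x hx => ⟨hx.1, lt_of_lt_of_le hx.2 (le_trans htb2 hb2.le)⟩
    have hv''neg : ∀ p ∈ Set.Ioo b1 t, v'' p < 0 :=
      fun p hp => husub ⟨hp.1, lt_of_lt_of_le hp.2 (min_le_left u b2)⟩
    have hv'le : ∀ p ∈ Set.Ioo b1 t, v' p ≤ 0 :=
      nonpos_of_deriv_nonpos' b1 t v' v'' (fun p hp => hd2 p (Or.inl (hIsubb2 hp)))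
        (fun p hp => (hv''neg p hp).le) hlim0
    have hvle : ∀ p ∈ Set.Ioo b1 t, v p ≤ 0 :=
      nonpos_of_deriv_nonpos' b1 t v v' (fun p hp => hd1 p (hIsub hp)) hv'le htv0
    have hv0 : ∀ p ∈ Set.Ioo b1 t, v p = 0 :=
      fun p hp => le_antisymm (hvle p hp) (nonneg p (hIsub hp))
    have hv'0 : ∀ p ∈ Set.Ioo b1 t, v' p = 0 :=
      deriv_zero_of_zero' b1 t v v' (fun p hp => hd1 p (hIsub hp)) hv0
    have hv''0 : ∀ p ∈ Set.Ioo b1 t, v'' p = 0 :=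
      deriv_zero_of_zero' b1 t v' v'' (fun p hp => hd2 p (Or.inl (hIsubb2 hp))) hv'0
    obtain ⟨p0, hp0⟩ : ∃ p, p ∈ Set.Ioo b1 t := ⟨(b1 + t)/2, by constructor <;> linarith⟩
    have := hv''neg p0 hp0
    rw [hv''0 p0 hp0] at this
    exact lt_irrefl 0 this
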